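/- Let l ≥ 1, let 0 < ε ≤ 1, and let Ext: {0,1}^{n_1}×⋯×{0,1}^{n_l} → {0,1}^m be a (k_1,…,k_l,ε) l-source extractor. Then Ext is a (k_1+log₂(1/ε),…,k_l+log₂(1/ε),(l+1)ε) classical-proof l-source extractor in the Markov model; explicitly: for every joint distribution of finite random variables (X_1,…,X_l,Z), with X_i taking values in {0,1}^{n_i}, such that for every i ∈ {1,…,l} the variable X_i is conditionally independent of (X_j)_{j≠i} given Z, and such that H_min(X_i|Z) ≥ k_i + log₂(1/ε) for every i, one has (1/2)∑_{y∈{0,1}^m, z} |Pr[Ext(X_1,…,X_l)=y, Z=z] − 2^{−m}·Pr[Z=z]| ≤ (l+1)ε. -/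

import Mathlib

open Kronecker Matrix
open scoped ComplexOrder

section Aux
open Finset

variable {l : ℕ} {n : Fin l → ℕ}

lemma crux (f : (∀ i, Fin (n i) → Bool) → ℝ)
    (hM : ∀ (i : Fin l) (x : ∀ j, Fin (n j) → Bool),
      f x * (∑ x', f x')
        = (∑ x' ∈ univ.filter (fun x' => x' i = x i), f x')
          * (∑ x' ∈ univ.filter (fun x' => ∀ j, j ≠ i → x' j = x j), f x'))
    (T : Finset (Fin l)) (i : Fin l) (hi : i ∈ T) (x : ∀ j, Fin (n j) → Bool) :
    (∑ x' ∈ univ.filter (fun x' => ∀ j ∈ T, x' j = x j), f x') * (∑ x', f x')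
    = (∑ x' ∈ univ.filter (fun x' => x' i = x i), f x')
      * (∑ x' ∈ univ.filter (fun x' => ∀ j ∈ T.erase i, x' j = x j), f x') := by
  classical
  rw [sum_mul]
  have step1 : ∀ x' ∈ univ.filter (fun x' => ∀ j ∈ T, x' j = x j),
      f x' * (∑ x'', f x'')
      = (∑ x'' ∈ univ.filter (fun x'' => x'' i = x i), f x'')
        * (∑ x'' ∈ univ.filter (fun x'' => ∀ j, j ≠ i → x'' j = x' j), f x'') := by
    intro x' hx'
    rw [mem_filter] at hx'
    rw [hM i x']
    congr 2
    apply filter_congr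
    intro x'' _
    simp only [hx'.2 i hi]
  rw [Finset.sum_congr rfl step1, ← mul_sum]
  congr 1
  refine Eq.trans (Eq.symm (Finset.sum_sigma
    (univ.filter (fun x' : ∀ j, Fin (n j) → Bool => ∀ j ∈ T, x' j = x j))
    (fun x' => univ.filter (fun x'' : ∀ j, Fin (n j) → Bool => ∀ j, j ≠ i → x'' j = x' j))
    (fun p => f p.2))) ?_
  refine Finset.sum_bij' (fun p _ => p.2) (fun b _ => ⟨Function.update b i (x i), b⟩)
    ?_ ?_ ?_ ?_ ?_
  · rintro ⟨x', x''⟩ hp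
    rw [Finset.mem_sigma, mem_filter, mem_filter] at hp
    rw [mem_filter]
    refine ⟨mem_univ _, fun j hj => ?_⟩
    rw [mem_erase] at hj
    show x'' j = x j
    exact (hp.2.2 j hj.1).trans (hp.1.2 j hj.2)
  · intro b hb
    rw [mem_filter] at hb
    rw [Finset.mem_sigma, mem_filter, mem_filter]
    refine ⟨⟨mem_univ _, fun j hj => ?_⟩, mem_univ _, fun j hj => ?_⟩
    · show Function.update b i (x i) j = x j
      by_cases h : j = i
      · subst h; simp
      · rw [Function.update_of_ne h]
        exact hb.2 j (mem_erase.2 ⟨h, hj⟩)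
    · show b j = Function.update b i (x i) j
      rw [Function.update_of_ne hj]
  · rintro ⟨x', x''⟩ hp
    rw [Finset.mem_sigma, mem_filter, mem_filter] at hp
    show (⟨Function.update x'' i (x i), x''⟩ : Σ _ : ∀ j, Fin (n j) → Bool,
        ∀ j, Fin (n j) → Bool) = ⟨x', x''⟩
    have hux : Function.update x'' i (x i) = x' := by
      funext j
      by_cases h : j = i
      · subst h
        simp only [Function.update_self]
        exact (hp.1.2 j hi).symm
      · rw [Function.update_of_ne h]
        exact hp.2.2 j h
    rw [hux]
  · intro b hb; rfl
  · rintro ⟨x', x''⟩ hp; rfl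

lemma prodform (f : (∀ i, Fin (n i) → Bool) → ℝ)
    (hM : ∀ (i : Fin l) (x : ∀ j, Fin (n j) → Bool),
      f x * (∑ x', f x')
        = (∑ x' ∈ univ.filter (fun x' => x' i = x i), f x')
          * (∑ x' ∈ univ.filter (fun x' => ∀ j, j ≠ i → x' j = x j), f x'))
    (T : Finset (Fin l)) (x : ∀ j, Fin (n j) → Bool) :
    (∑ x' ∈ univ.filter (fun x' => ∀ j ∈ T, x' j = x j), f x') * (∑ x', f x') ^ T.card
    = (∑ x', f x') * ∏ i ∈ T, (∑ x' ∈ univ.filter (fun x' => x' i = x i), f x') := by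
  classical
  induction T using Finset.induction_on with
  | empty =>
    simp only [Finset.notMem_empty, false_implies, implies_true, filter_true_of_mem,
      Finset.card_empty, pow_zero, mul_one, Finset.prod_empty]
  | @insert i T' hiT ih =>
    rw [Finset.card_insert_of_notMem hiT, pow_succ]
    have h1 := crux f hM (insert i T') i (mem_insert_self i T') x
    rw [Finset.erase_insert hiT] at h1
    calc (∑ x' ∈ univ.filter (fun x' => ∀ j ∈ insert i T', x' j = x j), f x')
          * ((∑ x', f x') ^ T'.card * (∑ x', f x'))
        = ((∑ x' ∈ univ.filter (fun x' => ∀ j ∈ insert i T', x' j = x j), f x')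
            * (∑ x', f x')) * (∑ x', f x') ^ T'.card := by ring
      _ = ((∑ x' ∈ univ.filter (fun x' => x' i = x i), f x')
            * (∑ x' ∈ univ.filter (fun x' => ∀ j ∈ T', x' j = x j), f x'))
            * (∑ x', f x') ^ T'.card := by rw [h1]
      _ = (∑ x' ∈ univ.filter (fun x' => x' i = x i), f x')
            * ((∑ x' ∈ univ.filter (fun x' => ∀ j ∈ T', x' j = x j), f x')
            * (∑ x', f x') ^ T'.card) := by ring
      _ = (∑ x' ∈ univ.filter (fun x' => x' i = x i), f x')
            * ((∑ x', f x') * ∏ j ∈ T', (∑ x' ∈ univ.filter (fun x' => x' j = x j), f x')) := by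
            rw [ih]
      _ = (∑ x', f x')
            * ∏ j ∈ insert i T', (∑ x' ∈ univ.filter (fun x' => x' j = x j), f x') := by
            rw [Finset.prod_insert hiT]; ring

lemma prodform_univ (f : (∀ i, Fin (n i) → Bool) → ℝ)
    (hM : ∀ (i : Fin l) (x : ∀ j, Fin (n j) → Bool),
      f x * (∑ x', f x')
        = (∑ x' ∈ univ.filter (fun x' => x' i = x i), f x')
          * (∑ x' ∈ univ.filter (fun x' => ∀ j, j ≠ i → x' j = x j), f x'))
    (x : ∀ j, Fin (n j) → Bool) :
    f x * (∑ x', f x') ^ l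
    = (∑ x', f x') * ∏ i, (∑ x' ∈ univ.filter (fun x' => x' i = x i), f x') := by
  classical
  have h := prodform f hM Finset.univ x
  rw [Finset.card_univ, Fintype.card_fin] at h
  rw [← h]
  congr 2
  have : univ.filter (fun x' : ∀ j, Fin (n j) → Bool => ∀ j ∈ univ, x' j = x j) = {x} := by
    ext x'
    simp [funext_iff, Finset.mem_singleton]
  rw [this, Finset.sum_singleton]

lemma trivbound {m : ℕ} (Ext : (∀ i, Fin (n i) → Bool) → (Fin m → Bool))
    (f : (∀ i, Fin (n i) → Bool) → ℝ) (hf : ∀ x, 0 ≤ f x) :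
    (1/2) * ∑ y : Fin m → Bool,
      |(∑ x ∈ univ.filter (fun x => Ext x = y), f x) - ((2:ℝ)^m)⁻¹ * ∑ x, f x|
    ≤ ∑ x, f x := by
  have hP : 0 ≤ ∑ x, f x := Finset.sum_nonneg fun x _ => hf x
  have hcard : (Finset.univ : Finset (Fin m → Bool)).card = 2 ^ m := by
    simp [Finset.card_univ]
  have h1 : ∀ y : Fin m → Bool,
      |(∑ x ∈ univ.filter (fun x => Ext x = y), f x) - ((2:ℝ)^m)⁻¹ * ∑ x, f x|
      ≤ (∑ x ∈ univ.filter (fun x => Ext x = y), f x) + ((2:ℝ)^m)⁻¹ * ∑ x, f x := by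
    intro y
    have h2 : 0 ≤ ∑ x ∈ univ.filter (fun x => Ext x = y), f x :=
      Finset.sum_nonneg fun x _ => hf x
    have h3 : 0 ≤ ((2:ℝ)^m)⁻¹ * ∑ x, f x := by positivity
    rw [abs_sub_le_iff]; constructor <;> linarith
  calc (1/2) * ∑ y : Fin m → Bool,
        |(∑ x ∈ univ.filter (fun x => Ext x = y), f x) - ((2:ℝ)^m)⁻¹ * ∑ x, f x|
      ≤ (1/2) * ∑ y : Fin m → Bool,
        ((∑ x ∈ univ.filter (fun x => Ext x = y), f x) + ((2:ℝ)^m)⁻¹ * ∑ x, f x) := by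
        have := Finset.sum_le_sum (fun y (_ : y ∈ (univ : Finset (Fin m → Bool))) => h1 y)
        linarith
    _ = (1/2) * ((∑ x, f x) + (2:ℝ)^m * (((2:ℝ)^m)⁻¹ * ∑ x, f x)) := by
        rw [Finset.sum_add_distrib, Finset.sum_fiberwise, Finset.sum_const, hcard]
        push_cast; ring
    _ ≤ ∑ x, f x := by
        rw [← mul_assoc, mul_inv_cancel₀ (by positivity : ((2:ℝ)^m) ≠ 0)]
        linarith

lemma perz {m : ℕ} (Ext : (∀ i, Fin (n i) → Bool) → (Fin m → Bool))
    (k : Fin l → ℝ) (ε : ℝ)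
    (hExt : ∀ p : ∀ i, (Fin (n i) → Bool) → ℝ,
      (∀ i x, 0 ≤ p i x) → (∀ i, (∑ x, p i x) = 1) →
      (∀ i, Finset.univ.sup' Finset.univ_nonempty (p i) ≤ (2:ℝ) ^ (-(k i))) →
      (1/2) * ∑ y : Fin m → Bool,
        |(∑ x ∈ Finset.univ.filter (fun x : ∀ i, Fin (n i) → Bool => Ext x = y),
            ∏ i, p i (x i)) - ((2:ℝ)^m)⁻¹| ≤ ε)
    (f : (∀ i, Fin (n i) → Bool) → ℝ) (hf : ∀ x, 0 ≤ f x)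
    (hM : ∀ (i : Fin l) (x : ∀ j, Fin (n j) → Bool),
      f x * (∑ x', f x')
        = (∑ x' ∈ univ.filter (fun x' => x' i = x i), f x')
          * (∑ x' ∈ univ.filter (fun x' => ∀ j, j ≠ i → x' j = x j), f x'))
    (hgood : ∀ i, univ.sup' univ_nonempty
        (fun a : Fin (n i) → Bool => ∑ x ∈ univ.filter (fun x => x i = a), f x)
      ≤ (2:ℝ)^(-(k i)) * ∑ x, f x) :
    (1/2) * ∑ y : Fin m → Bool,
      |(∑ x ∈ univ.filter (fun x => Ext x = y), f x) - ((2:ℝ)^m)⁻¹ * ∑ x, f x|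
    ≤ ε * ∑ x, f x := by
  classical
  have hP0 : 0 ≤ ∑ x, f x := Finset.sum_nonneg fun x _ => hf x
  rcases eq_or_lt_of_le hP0 with hP | hP
  · -- P = 0
    have hz : ∀ x, f x = 0 := by
      intro x
      have := (Finset.sum_eq_zero_iff_of_nonneg (fun x _ => hf x)).1 hP.symm
      exact this x (mem_univ x)
    simp [hz]
  · -- P > 0
    set P : ℝ := ∑ x, f x with hPdef
    set p : ∀ i, (Fin (n i) → Bool) → ℝ :=
      fun i a => (∑ x ∈ univ.filter (fun x => x i = a), f x) / P with hpdef
    have hp0 : ∀ i a, 0 ≤ p i a := fun i a =>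
      div_nonneg (Finset.sum_nonneg fun x _ => hf x) hP0
    have hp1 : ∀ i, (∑ a, p i a) = 1 := by
      intro i
      rw [hpdef]
      simp only
      rw [← Finset.sum_div, Finset.sum_fiberwise univ (fun x => x i) f]
      exact div_self (ne_of_gt hP)
    have hpsup : ∀ i, Finset.univ.sup' Finset.univ_nonempty (p i) ≤ (2:ℝ) ^ (-(k i)) := by
      intro i
      apply Finset.sup'_le
      intro a _
      rw [hpdef]
      simp only
      rw [div_le_iff₀ hP]
      exact (Finset.sup'_le_iff _ _).1 (hgood i) a (mem_univ a)
    have hprod : ∀ x, (∏ i, p i (x i)) = f x / P := by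
      intro x
      rw [hpdef]
      simp only
      rw [Finset.prod_div_distrib, Finset.prod_const, Finset.card_univ, Fintype.card_fin]
      rw [div_eq_div_iff (by positivity) (ne_of_gt hP)]
      rw [prodform_univ f hM x]
      ring
    have hE := hExt p hp0 hp1 hpsup
    have hrw : ∀ y : Fin m → Bool,
        (∑ x ∈ univ.filter (fun x => Ext x = y), ∏ i, p i (x i))
        = (∑ x ∈ univ.filter (fun x => Ext x = y), f x) / P := by
      intro y
      rw [Finset.sum_congr rfl (fun x _ => hprod x), Finset.sum_div]
    have habs : ∀ y : Fin m → Bool,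
        |(∑ x ∈ univ.filter (fun x => Ext x = y), f x) / P - ((2:ℝ)^m)⁻¹|
        = |(∑ x ∈ univ.filter (fun x => Ext x = y), f x) - ((2:ℝ)^m)⁻¹ * P| / P := by
      intro y
      have h : (∑ x ∈ univ.filter (fun x => Ext x = y), f x) / P - ((2:ℝ)^m)⁻¹
          = ((∑ x ∈ univ.filter (fun x => Ext x = y), f x) - ((2:ℝ)^m)⁻¹ * P) / P := by
        field_simp
      rw [h, abs_div, abs_of_pos hP]
    simp only [hrw, habs] at hE
    rw [← Finset.sum_div, ← mul_div_assoc] at hE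
    exact (div_le_iff₀ hP).1 hE |>.trans_eq rfl

end Aux

theorem multi_source_extractor_classical_markov
    (l : ℕ) (hl : 1 ≤ l) (n : Fin l → ℕ) (m : ℕ)
    (Ext : (∀ i, Fin (n i) → Bool) → (Fin m → Bool))
    (k : Fin l → ℝ) (ε : ℝ) (hε0 : 0 < ε) (hε1 : ε ≤ 1)
    -- `Ext` is a `(k₁,…,k_l,ε)` `l`-source extractor:
    (hExt : ∀ p : ∀ i, (Fin (n i) → Bool) → ℝ,
      (∀ i x, 0 ≤ p i x) → (∀ i, (∑ x, p i x) = 1) →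
      (∀ i, Finset.univ.sup' Finset.univ_nonempty (p i) ≤ (2:ℝ) ^ (-(k i))) →
      (1/2) * ∑ y : Fin m → Bool,
        |(∑ x ∈ Finset.univ.filter (fun x : ∀ i, Fin (n i) → Bool => Ext x = y),
            ∏ i, p i (x i)) - ((2:ℝ)^m)⁻¹| ≤ ε) :
    -- then it is a classical-proof extractor in the Markov model:
    ∀ (Z : Type) [Fintype Z],
    ∀ q : (∀ i, Fin (n i) → Bool) → Z → ℝ,
      (∀ x z, 0 ≤ q x z) → (∑ x, ∑ z, q x z) = 1 →
      -- Markov model: each `X i` is conditionally independent of the others given `Z`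
      (∀ i x z, q x z * (∑ x', q x' z)
        = (∑ x' ∈ Finset.univ.filter (fun x' : ∀ j, Fin (n j) → Bool => x' i = x i), q x' z)
          * (∑ x' ∈ Finset.univ.filter
              (fun x' : ∀ j, Fin (n j) → Bool => ∀ j, j ≠ i → x' j = x j), q x' z)) →
      -- `H_min(X_i | Z) ≥ k_i + log₂(1/ε)`
      (∀ i, ∑ z, Finset.univ.sup' Finset.univ_nonempty
          (fun a : Fin (n i) → Bool =>
            ∑ x ∈ Finset.univ.filter (fun x : ∀ j, Fin (n j) → Bool => x i = a), q x z)
        ≤ (2:ℝ) ^ (-(k i + Real.logb 2 (1/ε)))) →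
      (1/2) * ∑ y : Fin m → Bool, ∑ z,
        |(∑ x ∈ Finset.univ.filter (fun x : ∀ i, Fin (n i) → Bool => Ext x = y), q x z)
          - ((2:ℝ)^m)⁻¹ * ∑ x, q x z|
        ≤ ((l : ℝ) + 1) * ε := by
  intro Z _ q hq0 hq1 hMarkov hmin
  classical
  -- notation
  set P : Z → ℝ := fun z => ∑ x, q x z with hPdef
  set S : (i : Fin l) → (Fin (n i) → Bool) → Z → ℝ :=
    fun i a z => ∑ x ∈ Finset.univ.filter (fun x : ∀ j, Fin (n j) → Bool => x i = a), q x z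
    with hSdef
  have hP0 : ∀ z, 0 ≤ P z := fun z => Finset.sum_nonneg fun x _ => hq0 x z
  have hsup0 : ∀ i z, 0 ≤ Finset.univ.sup' Finset.univ_nonempty (fun a => S i a z) := by
    intro i z
    rw [Finset.le_sup'_iff]
    exact ⟨Classical.arbitrary _, Finset.mem_univ _,
      Finset.sum_nonneg fun x _ => hq0 x z⟩
  -- the good set
  set G : Finset Z := Finset.univ.filter (fun z => ∀ i,
    Finset.univ.sup' Finset.univ_nonempty (fun a => S i a z) ≤ (2:ℝ)^(-(k i)) * P z)
    with hGdef
  -- rpow arithmetic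
  have hrpow : ∀ i, (2:ℝ) ^ (-(k i + Real.logb 2 (1/ε))) = (2:ℝ)^(-(k i)) * ε := by
    intro i
    rw [neg_add, Real.rpow_add (by norm_num : (0:ℝ) < 2)]
    congr 1
    rw [Real.rpow_neg (by norm_num : (0:ℝ) ≤ 2),
      Real.rpow_logb (by norm_num) (by norm_num) (by positivity)]
    simp
  have hkpos : ∀ i, (0:ℝ) < (2:ℝ)^(-(k i)) := fun i =>
    Real.rpow_pos_of_pos (by norm_num) _
  -- bad-set mass bound for each i
  have hbad : ∀ i, ∑ z ∈ Finset.univ.filter (fun z =>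
      ¬ Finset.univ.sup' Finset.univ_nonempty (fun a => S i a z) ≤ (2:ℝ)^(-(k i)) * P z),
      P z ≤ ε := by
    intro i
    set B := Finset.univ.filter (fun z =>
      ¬ Finset.univ.sup' Finset.univ_nonempty (fun a => S i a z) ≤ (2:ℝ)^(-(k i)) * P z)
    have h1 : ∀ z ∈ B, (2:ℝ)^(-(k i)) * P z
        ≤ Finset.univ.sup' Finset.univ_nonempty (fun a => S i a z) := by
      intro z hz
      rw [Finset.mem_filter] at hz
      exact le_of_lt (not_le.1 hz.2)
    have h2 : ∑ z ∈ B, (2:ℝ)^(-(k i)) * P z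
        ≤ ∑ z, Finset.univ.sup' Finset.univ_nonempty (fun a => S i a z) := by
      refine le_trans (Finset.sum_le_sum h1) ?_
      exact Finset.sum_le_sum_of_subset_of_nonneg (Finset.subset_univ _)
        (fun z _ _ => hsup0 i z)
    have h3 := le_trans h2 (le_of_le_of_eq (hmin i) (hrpow i))
    rw [← Finset.mul_sum] at h3
    have := (mul_le_mul_iff_right₀ (hkpos i)).1 h3
    linarith
  -- per-z bound
  have hperz : ∀ z : Z,
      (1/2) * ∑ y : Fin m → Bool,
        |(∑ x ∈ Finset.univ.filter (fun x : ∀ i, Fin (n i) → Bool => Ext x = y), q x z)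
          - ((2:ℝ)^m)⁻¹ * ∑ x, q x z|
      ≤ if z ∈ G then ε * P z else P z := by
    intro z
    by_cases hz : z ∈ G
    · rw [if_pos hz]
      rw [hGdef, Finset.mem_filter] at hz
      exact perz Ext k ε hExt (fun x => q x z) (fun x => hq0 x z)
        (fun i x => hMarkov i x z) hz.2
    · rw [if_neg hz]
      exact trivbound Ext (fun x => q x z) (fun x => hq0 x z)
  -- total probability
  have hPtot : ∑ z, P z = 1 := by
    rw [hPdef]
    rw [← hq1]
    exact Finset.sum_comm
  -- mass of the bad set
  have hbadtot : ∑ z ∈ Finset.univ \ G, P z ≤ (l : ℝ) * ε := by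
    have hle : ∀ z ∈ Finset.univ \ G, P z ≤ ∑ i : Fin l,
        (if ¬ Finset.univ.sup' Finset.univ_nonempty (fun a => S i a z)
            ≤ (2:ℝ)^(-(k i)) * P z then P z else 0) := by
      intro z hz
      rw [Finset.mem_sdiff, hGdef, Finset.mem_filter] at hz
      have : ∃ i, ¬ Finset.univ.sup' Finset.univ_nonempty (fun a => S i a z)
          ≤ (2:ℝ)^(-(k i)) * P z := by
        by_contra h
        push_neg at h
        exact hz.2 ⟨Finset.mem_univ z, h⟩
      obtain ⟨i0, hi0⟩ := this
      have := Finset.single_le_sum (f := fun i : Fin l =>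
          if ¬ Finset.univ.sup' Finset.univ_nonempty (fun a => S i a z)
            ≤ (2:ℝ)^(-(k i)) * P z then P z else 0)
        (fun i _ => ite_nonneg (hP0 z) le_rfl) (Finset.mem_univ i0)
      exact le_trans (le_of_eq (if_pos hi0).symm) this
    calc ∑ z ∈ Finset.univ \ G, P z
        ≤ ∑ z ∈ Finset.univ \ G, ∑ i : Fin l,
          (if ¬ Finset.univ.sup' Finset.univ_nonempty (fun a => S i a z)
              ≤ (2:ℝ)^(-(k i)) * P z then P z else 0) := Finset.sum_le_sum hle
      _ ≤ ∑ z, ∑ i : Fin l,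
          (if ¬ Finset.univ.sup' Finset.univ_nonempty (fun a => S i a z)
              ≤ (2:ℝ)^(-(k i)) * P z then P z else 0) := by
          refine Finset.sum_le_sum_of_subset_of_nonneg (Finset.subset_univ _) ?_
          intro z _ _
          exact Finset.sum_nonneg fun i _ => ite_nonneg (hP0 z) le_rfl
      _ = ∑ i : Fin l, ∑ z,
          (if ¬ Finset.univ.sup' Finset.univ_nonempty (fun a => S i a z)
              ≤ (2:ℝ)^(-(k i)) * P z then P z else 0) := Finset.sum_comm
      _ ≤ ∑ i : Fin l, ε := by
          refine Finset.sum_le_sum fun i _ => ?_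
          rw [← Finset.sum_filter]
          exact hbad i
      _ = (l : ℝ) * ε := by simp [mul_comm]
  -- assemble
  calc (1/2) * ∑ y : Fin m → Bool, ∑ z,
        |(∑ x ∈ Finset.univ.filter (fun x : ∀ i, Fin (n i) → Bool => Ext x = y), q x z)
          - ((2:ℝ)^m)⁻¹ * ∑ x, q x z|
      = ∑ z, (1/2) * ∑ y : Fin m → Bool,
        |(∑ x ∈ Finset.univ.filter (fun x : ∀ i, Fin (n i) → Bool => Ext x = y), q x z)
          - ((2:ℝ)^m)⁻¹ * ∑ x, q x z| := by
        rw [Finset.sum_comm, Finset.mul_sum]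
    _ ≤ ∑ z, (if z ∈ G then ε * P z else P z) := Finset.sum_le_sum fun z _ => hperz z
    _ = ∑ z ∈ G, ε * P z + ∑ z ∈ Finset.univ \ G, P z := by
        rw [Finset.sum_ite, Finset.filter_univ_mem, Finset.sdiff_eq_filter]
    _ ≤ ε * 1 + (l : ℝ) * ε := by
        have h1 : ∑ z ∈ G, ε * P z ≤ ε * 1 := by
          rw [← Finset.mul_sum]
          have : ∑ z ∈ G, P z ≤ 1 := by
            rw [← hPtot]
            exact Finset.sum_le_sum_of_subset_of_nonneg (Finset.subset_univ _)
              (fun z _ _ => hP0 z)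
          exact mul_le_mul_of_nonneg_left this (le_of_lt hε0)
        linarith [hbadtot]
    _ = ((l : ℝ) + 1) * ε := by ring
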